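/- Let F be a field with char(F) ≠ 2 and char(F) ≠ 3. The norm-preserving group of M₃(F) acts transitively on matrices of rank 1, transitively on matrices of rank 2, and, for each k ∈ F with k ≠ 0, transitively on matrices of determinant k. That is: (1) for any X, Y ∈ M₃(F) of matrix rank 1 there exist P, Q ∈ GL₃(F) with det(P) = det(Q) and P·X·Q⁻¹ = Y; (2) the same holds for matrix rank 2; (3) for any k ≠ 0 and any X, Y ∈ M₃(F) with det(X) = det(Y) = k there exist such P, Q with P·X·Q⁻¹ = Y. -/

import Mathlib

open Matrix

section NormPreservingHelpers

open Matrix Module Submodule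

variable {F : Type*} [Field F]

lemma rank_decomp (X : Matrix (Fin 3) (Fin 3) F) :
    ∃ A B : GL (Fin 3) F,
      X = (A : Matrix (Fin 3) (Fin 3) F) *
        Matrix.diagonal (fun i : Fin 3 => if (i : ℕ) < X.rank then (1 : F) else 0) *
        (B : Matrix (Fin 3) (Fin 3) F) := by
  classical
  set f := X.mulVecLin with hf
  set r := X.rank with hrdef
  have hfr : finrank F (LinearMap.range f) = r := rfl
  have hrn : finrank F (LinearMap.range f) + finrank F (LinearMap.ker f) = 3 := by
    simpa using LinearMap.finrank_range_add_finrank_ker f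
  have hr3 : r ≤ 3 := by omega
  have hker : finrank F (LinearMap.ker f) = 3 - r := by omega
  obtain ⟨W, hW⟩ := Submodule.exists_isCompl (LinearMap.ker f)
  have hWr : finrank F W = r := by
    have := Submodule.finrank_add_eq_of_isCompl hW
    simp only [finrank_fintype_fun_eq_card, Fintype.card_fin] at this
    omega
  obtain ⟨W', hW'⟩ := Submodule.exists_isCompl (LinearMap.range f)
  have hW'r : finrank F W' = 3 - r := by
    have := Submodule.finrank_add_eq_of_isCompl hW'
    simp only [finrank_fintype_fun_eq_card, Fintype.card_fin] at this
    omega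
  -- iso from W to range f
  set φ : W →ₗ[F] LinearMap.range f :=
    (f ∘ₗ W.subtype).codRestrict (LinearMap.range f)
      (fun w => ⟨w.1, rfl⟩) with hφ
  have hφbij : Function.Bijective φ := by
    constructor
    · intro x y hxy
      have hfx : f x.1 = f y.1 := congrArg Subtype.val hxy
      have : (x : Fin 3 → F) - y ∈ LinearMap.ker f ⊓ W := by
        refine ⟨?_, sub_mem x.2 y.2⟩
        simp [LinearMap.mem_ker, map_sub, hfx]
      rw [hW.inf_eq_bot] at this
      exact Subtype.ext (by simpa [sub_eq_zero] using this)
    · rintro ⟨y, v, rfl⟩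
      have hv : v ∈ LinearMap.ker f ⊔ W := by rw [hW.sup_eq_top]; trivial
      obtain ⟨k, hk, w, hw, rfl⟩ := Submodule.mem_sup.mp hv
      refine ⟨⟨w, hw⟩, ?_⟩
      apply Subtype.ext
      simp only [φ, LinearMap.codRestrict_apply, LinearMap.comp_apply]
      simp [map_add, LinearMap.mem_ker.mp hk]
      rfl
  set e1 : W ≃ₗ[F] LinearMap.range f := LinearEquiv.ofBijective φ hφbij with he1
  have hsum : r + (3 - r) = 3 := by omega
  set bW : Basis (Fin r) F W := finBasisOfFinrankEq F W hWr with hbW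
  set bK : Basis (Fin (3 - r)) F (LinearMap.ker f) :=
    finBasisOfFinrankEq F _ hker with hbK
  set bR : Basis (Fin r) F (LinearMap.range f) := bW.map e1 with hbR
  set bW' : Basis (Fin (3 - r)) F W' := finBasisOfFinrankEq F W' hW'r with hbW'
  set ee : (Fin r ⊕ Fin (3 - r)) ≃ Fin 3 := finSumFinEquiv.trans (finCongr hsum) with hee
  set b : Basis (Fin 3) F (Fin 3 → F) :=
    ((bW.prod bK).map (Submodule.prodEquivOfIsCompl W (LinearMap.ker f) hW.symm)).reindex ee
    with hb
  set c : Basis (Fin 3) F (Fin 3 → F) :=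
    ((bR.prod bW').map (Submodule.prodEquivOfIsCompl (LinearMap.range f) W' hW')).reindex ee
    with hc
  -- key evaluation
  have hkey : ∀ j : Fin 3, f (b j) = if (j : ℕ) < r then c j else 0 := by
    intro j
    have heesymm : ∀ j : Fin 3, ee.symm j =
        if h : (j : ℕ) < r then Sum.inl ⟨j, h⟩ else Sum.inr ⟨(j : ℕ) - r, by omega⟩ := by
      intro j
      rcases lt_or_ge (j : ℕ) r with h | h
      · rw [dif_pos h]
        apply ee.injective
        simp only [Equiv.apply_symm_apply, ee, Equiv.trans_apply, finCongr_apply,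
          finSumFinEquiv_apply_left, Fin.ext_iff, Fin.coe_cast, Fin.coe_castAdd]
      · rw [dif_neg (not_lt.mpr h)]
        apply ee.injective
        simp only [Equiv.apply_symm_apply, ee, Equiv.trans_apply, finCongr_apply,
          finSumFinEquiv_apply_right, Fin.ext_iff, Fin.coe_cast, Fin.natAdd_mk]
        omega
    rcases lt_or_ge (j : ℕ) r with h | h
    · rw [if_pos h]
      have hbj : b j = (bW ⟨j, h⟩ : Fin 3 → F) := by
        simp [b, Basis.reindex_apply, heesymm, h, Basis.prod_apply,
          Submodule.coe_prodEquivOfIsCompl']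
      have hcj : c j = ((bR ⟨j, h⟩ : LinearMap.range f) : Fin 3 → F) := by
        simp [c, Basis.reindex_apply, heesymm, h, Basis.prod_apply,
          Submodule.coe_prodEquivOfIsCompl']
      rw [hbj, hcj, hbR]
      rfl
    · rw [if_neg (not_lt.mpr h)]
      have hbj : b j = ((bK ⟨(j : ℕ) - r, by omega⟩ : LinearMap.ker f) : Fin 3 → F) := by
        simp [b, Basis.reindex_apply, heesymm, not_lt.mpr h, Basis.prod_apply,
          Submodule.coe_prodEquivOfIsCompl']
      rw [hbj]
      exact LinearMap.mem_ker.mp (bK _).2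
  -- matrices
  set B' : Matrix (Fin 3) (Fin 3) F := (Pi.basisFun F (Fin 3)).toMatrix ⇑b with hB'
  set C' : Matrix (Fin 3) (Fin 3) F := (Pi.basisFun F (Fin 3)).toMatrix ⇑c with hC'
  have hBe : ∀ i j, B' i j = b j i := by
    intro i j; simp [B', Basis.toMatrix_apply]
  have hCe : ∀ i j, C' i j = c j i := by
    intro i j; simp [C', Basis.toMatrix_apply]
  have hDB : X * B' = C' * Matrix.diagonal (fun i : Fin 3 => if (i : ℕ) < r then (1 : F) else 0) := by
    ext i j
    rw [Matrix.mul_apply]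
    have hx : ∑ k, X i k * B' k j = f (b j) i := by
      simp only [hBe]
      simp [f, Matrix.mulVecLin_apply, Matrix.mulVec, dotProduct]
    rw [hx, Matrix.mul_apply]
    rw [Finset.sum_eq_single j]
    · rw [hkey j]
      rcases lt_or_ge (j : ℕ) r with h | h
      · simp [Matrix.diagonal, h, hCe]
      · simp [Matrix.diagonal, not_lt.mpr h]
    · intro k _ hk
      simp [Matrix.diagonal_apply_ne _ hk]
    · simp
  have hBinv : Invertible B' := (Pi.basisFun F (Fin 3)).invertibleToMatrix b
  have hCinv : Invertible C' := (Pi.basisFun F (Fin 3)).invertibleToMatrix c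
  refine ⟨unitOfInvertible C', (unitOfInvertible B')⁻¹, ?_⟩
  have : X = C' * Matrix.diagonal (fun i : Fin 3 => if (i : ℕ) < r then (1 : F) else 0) * ⅟B' := by
    rw [← hDB, Matrix.mul_assoc, mul_invOf_self, Matrix.mul_one]
  rw [this]
  rfl


lemma det_coe_mul_det_coe_inv (A : GL (Fin 3) F) :
    (A : Matrix (Fin 3) (Fin 3) F).det * ((A⁻¹ : GL (Fin 3) F) : Matrix (Fin 3) (Fin 3) F).det
      = 1 := by
  rw [← Matrix.det_mul, ← Units.val_mul, mul_inv_cancel, Units.val_one, Matrix.det_one]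

lemma orbit_of_rank_le_two (X Y : Matrix (Fin 3) (Fin 3) F) (r : ℕ) (hr : r ≤ 2)
    (hX : X.rank = r) (hY : Y.rank = r) :
    ∃ P Q : GL (Fin 3) F,
      ((P : Matrix (Fin 3) (Fin 3) F).det = (Q : Matrix (Fin 3) (Fin 3) F).det) ∧
      (P : Matrix (Fin 3) (Fin 3) F) * X * ((Q⁻¹ : GL (Fin 3) F) : Matrix (Fin 3) (Fin 3) F)
        = Y := by
  classical
  obtain ⟨A₁, B₁, h1⟩ := rank_decomp X
  obtain ⟨A₂, B₂, h2⟩ := rank_decomp Y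
  rw [hX] at h1
  rw [hY] at h2
  set D : Matrix (Fin 3) (Fin 3) F :=
    Matrix.diagonal (fun i : Fin 3 => if (i : ℕ) < r then (1 : F) else 0) with hD
  -- determinant facts
  have ha1 := det_coe_mul_det_coe_inv A₁
  have ha2 := det_coe_mul_det_coe_inv A₂
  have hb1 := det_coe_mul_det_coe_inv B₁
  have hb2 := det_coe_mul_det_coe_inv B₂
  have ha1n : (A₁ : Matrix (Fin 3) (Fin 3) F).det ≠ 0 := left_ne_zero_of_mul_eq_one ha1
  have ha2n : (A₂ : Matrix (Fin 3) (Fin 3) F).det ≠ 0 := left_ne_zero_of_mul_eq_one ha2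
  have hb1n : (B₁ : Matrix (Fin 3) (Fin 3) F).det ≠ 0 := left_ne_zero_of_mul_eq_one hb1
  have hb2n : (B₂ : Matrix (Fin 3) (Fin 3) F).det ≠ 0 := left_ne_zero_of_mul_eq_one hb2
  set s : F := ((A₁ : Matrix (Fin 3) (Fin 3) F).det * (B₁ : Matrix (Fin 3) (Fin 3) F).det) *
    (((A₂ : Matrix (Fin 3) (Fin 3) F).det * (B₂ : Matrix (Fin 3) (Fin 3) F).det))⁻¹ with hs
  have hsne : s ≠ 0 := by
    apply mul_ne_zero (mul_ne_zero ha1n hb1n)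
    exact inv_ne_zero (mul_ne_zero ha2n hb2n)
  set E : Matrix (Fin 3) (Fin 3) F :=
    Matrix.diagonal (fun i : Fin 3 => if (i : ℕ) < 2 then (1 : F) else s) with hE
  have hdetE : E.det = s := by
    rw [hE, Matrix.det_diagonal, Fin.prod_univ_three]
    norm_num
  have hEunit : IsUnit E.det := by rw [hdetE]; exact Ne.isUnit hsne
  set Eu : GL (Fin 3) F := Matrix.nonsingInvUnit E hEunit with hEu
  have hEuval : (Eu : Matrix (Fin 3) (Fin 3) F) = E := rfl
  have hED : E * D = D := by
    ext i j
    rw [hE, hD, Matrix.diagonal_mul_diagonal]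
    rcases eq_or_ne i j with rfl | hne
    · simp only [Matrix.diagonal_apply_eq]
      rcases lt_or_ge (i : ℕ) r with h | h
      · simp [h, lt_of_lt_of_le h hr]
      · simp [not_lt.mpr h]
    · simp [Matrix.diagonal_apply_ne _ hne]
  refine ⟨A₂ * Eu * A₁⁻¹, B₂⁻¹ * B₁, ?_, ?_⟩
  · -- determinant equality
    have hPdet : ((A₂ * Eu * A₁⁻¹ : GL (Fin 3) F) : Matrix (Fin 3) (Fin 3) F).det =
        (A₂ : Matrix (Fin 3) (Fin 3) F).det * s *
          ((A₁⁻¹ : GL (Fin 3) F) : Matrix (Fin 3) (Fin 3) F).det := by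
      simp [Units.val_mul, Matrix.det_mul, hEuval, hdetE]
    have hQdet : ((B₂⁻¹ * B₁ : GL (Fin 3) F) : Matrix (Fin 3) (Fin 3) F).det =
        ((B₂⁻¹ : GL (Fin 3) F) : Matrix (Fin 3) (Fin 3) F).det *
          (B₁ : Matrix (Fin 3) (Fin 3) F).det := by
      simp [Units.val_mul, Matrix.det_mul]
    rw [hPdet, hQdet]
    have e1 : ((A₁⁻¹ : GL (Fin 3) F) : Matrix (Fin 3) (Fin 3) F).det =
        ((A₁ : Matrix (Fin 3) (Fin 3) F).det)⁻¹ := eq_inv_of_mul_eq_one_right ha1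
    have e2 : ((B₂⁻¹ : GL (Fin 3) F) : Matrix (Fin 3) (Fin 3) F).det =
        ((B₂ : Matrix (Fin 3) (Fin 3) F).det)⁻¹ := eq_inv_of_mul_eq_one_right hb2
    rw [e1, e2, hs]
    field_simp
  · -- the conjugation equality
    have hQinv : ((B₂⁻¹ * B₁ : GL (Fin 3) F)⁻¹ : GL (Fin 3) F) = B₁⁻¹ * B₂ := by
      rw [_root_.mul_inv_rev, inv_inv]
    rw [hQinv, h1]
    simp only [Units.val_mul, hEuval]
    calc (A₂ : Matrix (Fin 3) (Fin 3) F) * E * (A₁⁻¹ : GL (Fin 3) F) *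
          ((A₁ : Matrix (Fin 3) (Fin 3) F) * D * B₁) *
          (((B₁⁻¹ : GL (Fin 3) F) : Matrix (Fin 3) (Fin 3) F) * B₂)
        = (A₂ : Matrix (Fin 3) (Fin 3) F) * (E *
            ((((A₁⁻¹ : GL (Fin 3) F) : Matrix (Fin 3) (Fin 3) F) *
              (A₁ : Matrix (Fin 3) (Fin 3) F)) * (D * ((B₁ : Matrix (Fin 3) (Fin 3) F) *
              ((B₁⁻¹ : GL (Fin 3) F) : Matrix (Fin 3) (Fin 3) F))))) *
            (B₂ : Matrix (Fin 3) (Fin 3) F) := by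
          simp only [Matrix.mul_assoc]
      _ = (A₂ : Matrix (Fin 3) (Fin 3) F) * (E * D) * (B₂ : Matrix (Fin 3) (Fin 3) F) := by
          rw [← Units.val_mul, inv_mul_cancel, ← Units.val_mul, mul_inv_cancel]
          simp [Matrix.mul_assoc]
      _ = Y := by rw [hED, ← h2]


end NormPreservingHelpers


/-- **Orbits of the norm-preserving group of `M₃(F)` over a field of characteristic `≠ 2, 3`.**
The norm-preserving group (transformations `X ↦ P·X·Q⁻¹` with `det P = det Q`) acts
transitively on matrices of rank 1, on matrices of rank 2, and, for each `k ≠ 0`,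
on matrices of determinant `k`. -/
theorem norm_preserving_orbits_field (F : Type*) [Field F]
    (h2 : (2 : F) ≠ 0) (h3 : (3 : F) ≠ 0) :
    (∀ X Y : Matrix (Fin 3) (Fin 3) F, X.rank = 1 → Y.rank = 1 →
      ∃ P Q : GL (Fin 3) F,
        ((P : Matrix (Fin 3) (Fin 3) F).det = (Q : Matrix (Fin 3) (Fin 3) F).det) ∧
        (P : Matrix (Fin 3) (Fin 3) F) * X * ((Q⁻¹ : GL (Fin 3) F) : Matrix (Fin 3) (Fin 3) F)
          = Y) ∧
    (∀ X Y : Matrix (Fin 3) (Fin 3) F, X.rank = 2 → Y.rank = 2 →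
      ∃ P Q : GL (Fin 3) F,
        ((P : Matrix (Fin 3) (Fin 3) F).det = (Q : Matrix (Fin 3) (Fin 3) F).det) ∧
        (P : Matrix (Fin 3) (Fin 3) F) * X * ((Q⁻¹ : GL (Fin 3) F) : Matrix (Fin 3) (Fin 3) F)
          = Y) ∧
    (∀ k : F, k ≠ 0 → ∀ X Y : Matrix (Fin 3) (Fin 3) F, X.det = k → Y.det = k →
      ∃ P Q : GL (Fin 3) F,
        ((P : Matrix (Fin 3) (Fin 3) F).det = (Q : Matrix (Fin 3) (Fin 3) F).det) ∧
        (P : Matrix (Fin 3) (Fin 3) F) * X * ((Q⁻¹ : GL (Fin 3) F) : Matrix (Fin 3) (Fin 3) F)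
          = Y) := by
  refine ⟨fun X Y hX hY => orbit_of_rank_le_two X Y 1 (by norm_num) hX hY,
    fun X Y hX hY => orbit_of_rank_le_two X Y 2 (by norm_num) hX hY,
    fun k hk X Y hX hY => ?_⟩
  have hXu : IsUnit X.det := by rw [hX]; exact hk.isUnit
  have hYu : IsUnit Y.det := by rw [hY]; exact hk.isUnit
  letI := X.invertibleOfIsUnitDet hXu
  letI := Y.invertibleOfIsUnitDet hYu
  set Xu : GL (Fin 3) F := unitOfInvertible X with hXudef
  set Yu : GL (Fin 3) F := unitOfInvertible Y with hYudef
  refine ⟨Yu * Xu⁻¹, 1, ?_, ?_⟩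
  · have hx : (Xu : Matrix (Fin 3) (Fin 3) F).det *
        ((Xu⁻¹ : GL (Fin 3) F) : Matrix (Fin 3) (Fin 3) F).det = 1 :=
      det_coe_mul_det_coe_inv Xu
    have hxval : (Xu : Matrix (Fin 3) (Fin 3) F) = X := rfl
    have hxinv : ((Xu⁻¹ : GL (Fin 3) F) : Matrix (Fin 3) (Fin 3) F).det = k⁻¹ := by
      have := eq_inv_of_mul_eq_one_right hx
      rw [this, hxval, hX]
    simp only [Units.val_mul, Matrix.det_mul, hxinv, Units.val_one, Matrix.det_one]
    have : (Yu : Matrix (Fin 3) (Fin 3) F).det = k := by rw [show (Yu : Matrix (Fin 3) (Fin 3) F) = Y from rfl, hY]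
    rw [this, mul_inv_cancel₀ hk]
  · have h1 : ((1 : GL (Fin 3) F)⁻¹ : GL (Fin 3) F) = 1 := inv_one
    rw [h1, Units.val_one, Matrix.mul_one, Units.val_mul]
    have hxval : (Xu : Matrix (Fin 3) (Fin 3) F) = X := rfl
    rw [← hxval, Matrix.mul_assoc, ← Units.val_mul, inv_mul_cancel, Units.val_one,
      Matrix.mul_one]
    rfl
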